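/- Let X be a real Banach space, T > 0, f : [0,T] × X × X → X continuous, and φ : X → X a homeomorphism with φ(0) = 0 whose inverse φ⁻¹ is Lipschitz with constant k. Suppose ‖f(t,x,y)‖ ≤ c₀ + c₁‖y‖ for all (t,x,y) with constants c₀, c₁ ≥ 0. If u : [0,T] → X is C¹ with u'(0) = 0 and φ(u'(t)) = ∫₀ᵗ f(s, u(s), u'(s)) ds for all t ∈ [0,T], then ‖u'(t)‖ ≤ k c₀ T e^{k c₁ T} for all t ∈ [0,T]. -/

import Mathlib

open Set intervalIntegral Real

theorem apriori_deriv_bound {X : Type*} [NormedAddCommGroup X] [NormedSpace ℝ X]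
    [CompleteSpace X]
    (T k c₀ c₁ : ℝ) (hT : 0 < T) (hk : 0 ≤ k) (hc₀ : 0 ≤ c₀) (hc₁ : 0 ≤ c₁)
    (f : ℝ → X → X → X) (hf : Continuous fun p : ℝ × X × X => f p.1 p.2.1 p.2.2)
    (φ ψ : X → X) (hφcont : Continuous φ)
    (hleft : Function.LeftInverse ψ φ) (hright : Function.RightInverse ψ φ)
    (hφ0 : φ 0 = 0)
    (hLip : ∀ a b, ‖ψ a - ψ b‖ ≤ k * ‖a - b‖)
    (hbound : ∀ t x y, ‖f t x y‖ ≤ c₀ + c₁ * ‖y‖)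
    (u u' : ℝ → X)
    (hderiv : ∀ t ∈ Set.Icc (0 : ℝ) T, HasDerivAt u (u' t) t)
    (hcont : ContinuousOn u' (Set.Icc (0 : ℝ) T))
    (hu'0 : u' 0 = 0)
    (heq : ∀ t ∈ Set.Icc (0 : ℝ) T, φ (u' t) = ∫ s in (0 : ℝ)..t, f s (u s) (u' s)) :
    ∀ t ∈ Set.Icc (0 : ℝ) T, ‖u' t‖ ≤ k * c₀ * T * Real.exp (k * c₁ * T) := by
  -- projection onto [0,T]
  set pj : ℝ → ℝ := fun s => max 0 (min s T) with hpjdef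
  have hpjcont : Continuous pj := continuous_const.max (continuous_id.min continuous_const)
  have hpjmem : ∀ s, pj s ∈ Icc (0:ℝ) T := fun s =>
    ⟨le_max_left _ _, max_le (le_of_lt hT) (min_le_right _ _)⟩
  have hpjid : ∀ s ∈ Icc (0:ℝ) T, pj s = s := fun s hs => by
    simp [hpjdef, min_eq_left hs.2, max_eq_right hs.1]
  have hucont : ContinuousOn u (Icc (0:ℝ) T) := fun x hx =>
    (hderiv x hx).continuousAt.continuousWithinAt
  -- continuous extensions
  set v : ℝ → X := fun s => u' (pj s) with hvdef
  have hvcont : Continuous v := hcont.comp_continuous hpjcont hpjmem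
  have hveq : ∀ s ∈ Icc (0:ℝ) T, v s = u' s := fun s hs => by rw [hvdef]; simp [hpjid s hs]
  set G : ℝ → X := fun s => f (pj s) (u (pj s)) (v s) with hGdef
  have hGcont : Continuous G := by
    have : Continuous fun s => ((pj s, u (pj s), v s) : ℝ × X × X) :=
      hpjcont.prodMk (((hucont.comp_continuous hpjcont hpjmem)).prodMk hvcont)
    exact hf.comp this
  have hGeq : ∀ s ∈ Icc (0:ℝ) T, G s = f s (u s) (u' s) := fun s hs => by
    rw [hGdef]; simp only [hveq s hs, hpjid s hs]
  have hGbound : ∀ s, ‖G s‖ ≤ c₀ + c₁ * ‖v s‖ := fun s => hbound _ _ _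
  -- the primitive of ‖v‖
  set g : ℝ → ℝ := fun t => ∫ s in (0:ℝ)..t, ‖v s‖ with hgdef
  have hvn : Continuous fun s => ‖v s‖ := hvcont.norm
  have hg' : ∀ x : ℝ, HasDerivAt g ‖v x‖ x := fun x =>
    (hvn.integral_hasStrictDerivAt 0 x).hasDerivAt
  have hgnonneg : ∀ t, 0 ≤ t → 0 ≤ g t := fun t ht =>
    intervalIntegral.integral_nonneg ht (fun s _ => norm_nonneg _)
  have hψ0 : ψ 0 = 0 := by
    have := hleft 0
    rwa [hφ0] at this
  set K := k * c₁ with hK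
  set ε := k * (c₀ * T) with hε
  have hεnn : 0 ≤ ε := mul_nonneg hk (mul_nonneg hc₀ hT.le)
  -- key pointwise estimate
  have key : ∀ t ∈ Icc (0:ℝ) T, ‖u' t‖ ≤ K * g t + ε := by
    intro t ht
    have h1 : ‖u' t‖ ≤ k * ‖φ (u' t)‖ := by
      calc ‖u' t‖ = ‖ψ (φ (u' t)) - ψ 0‖ := by rw [hleft, hψ0, sub_zero]
        _ ≤ k * ‖φ (u' t) - 0‖ := hLip _ _
        _ = k * ‖φ (u' t)‖ := by rw [sub_zero]
    have h2 : (∫ s in (0:ℝ)..t, f s (u s) (u' s)) = ∫ s in (0:ℝ)..t, G s := by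
      apply intervalIntegral.integral_congr
      intro s hs
      rw [Set.uIcc_of_le ht.1] at hs
      exact (hGeq s ⟨hs.1, hs.2.trans ht.2⟩).symm
    have h3 : ‖φ (u' t)‖ ≤ c₀ * t + c₁ * g t := by
      rw [heq t ht, h2]
      calc ‖∫ s in (0:ℝ)..t, G s‖ ≤ ∫ s in (0:ℝ)..t, ‖G s‖ :=
            intervalIntegral.norm_integral_le_integral_norm ht.1
        _ ≤ ∫ s in (0:ℝ)..t, (c₀ + c₁ * ‖v s‖) := by
            apply intervalIntegral.integral_mono_on ht.1
            · exact (hGcont.norm.intervalIntegrable _ _)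
            · exact ((continuous_const.add (continuous_const.mul hvn)).intervalIntegrable _ _)
            · exact fun s _ => hGbound s
        _ = c₀ * t + c₁ * g t := by
            rw [intervalIntegral.integral_add (g := fun s => c₁ * ‖v s‖) (intervalIntegrable_const)
              ((continuous_const.mul hvn).intervalIntegrable _ _),
              intervalIntegral.integral_const, intervalIntegral.integral_const_mul]
            simp [hgdef, mul_comm]
    calc ‖u' t‖ ≤ k * ‖φ (u' t)‖ := h1
      _ ≤ k * (c₀ * t + c₁ * g t) := by
          exact mul_le_mul_of_nonneg_left h3 hk
      _ ≤ K * g t + ε := by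
          rw [hK, hε]
          have : c₀ * t ≤ c₀ * T := mul_le_mul_of_nonneg_left ht.2 hc₀
          nlinarith [hgnonneg t ht.1]
  -- Gronwall applied to g
  have hgron : ∀ t ∈ Icc (0:ℝ) T, ‖g t‖ ≤ gronwallBound 0 K ε (t - 0) := by
    apply norm_le_gronwallBound_of_norm_deriv_right_le
      (f' := fun x => ‖v x‖)
    · exact fun x _ => ((hg' x).continuousAt).continuousWithinAt
    · exact fun x hx => (hg' x).hasDerivWithinAt
    · simp [hgdef]
    · intro x hx
      have hx' : x ∈ Icc (0:ℝ) T := ⟨hx.1, hx.2.le⟩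
      have := key x hx'
      rw [hveq x hx', norm_norm]
      rw [Real.norm_eq_abs, abs_of_nonneg (hgnonneg x hx.1)]
      exact this
  -- conclude
  intro t ht
  have hgb : g t ≤ gronwallBound 0 K ε t := by
    have := hgron t ht
    rwa [sub_zero, Real.norm_eq_abs, abs_of_nonneg (hgnonneg t ht.1)] at this
  have hfinal : K * gronwallBound 0 K ε t + ε ≤ ε * Real.exp (K * T) := by
    by_cases hK0 : K = 0
    · rw [hK0]
      simp
    · have hKpos : 0 < K := lt_of_le_of_ne (mul_nonneg hk hc₁) (Ne.symm hK0)
      rw [gronwallBound_of_K_ne_0 hK0]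
      have hexp : Real.exp (K * t) ≤ Real.exp (K * T) :=
        Real.exp_le_exp.2 (mul_le_mul_of_nonneg_left ht.2 hKpos.le)
      have : K * (0 * rexp (K * t) + ε / K * (rexp (K * t) - 1)) + ε = ε * rexp (K * t) := by
        field_simp; ring
      rw [this]
      exact mul_le_mul_of_nonneg_left hexp hεnn
  have := key t ht
  calc ‖u' t‖ ≤ K * g t + ε := this
    _ ≤ K * gronwallBound 0 K ε t + ε := by
        have : K * g t ≤ K * gronwallBound 0 K ε t :=
          mul_le_mul_of_nonneg_left hgb (mul_nonneg hk hc₁)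
        linarith
    _ ≤ ε * Real.exp (K * T) := hfinal
    _ = k * c₀ * T * Real.exp (k * c₁ * T) := by rw [hε, hK]; ring
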